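/- Let ⟨α_n : n ∈ ω⟩ be a strictly decreasing sequence of reals in (0,1), let J_n = {a ⊆ ω∖{0} : Σ_{k∈a} k^{-α_n} < ∞}, and let J = ⋂_n J_n. Then J is a tall P-ideal: (a) every infinite set a of positive integers has an infinite subset b with b ∈ J; and (b) for every countable family {a_m : m ∈ ω} ⊆ J there is b ∈ J with a_m ∖ b finite for every m. -/

import Mathlib

set_option maxHeartbeats 1000000


open Set

/-- The summable ideal with weight function `k ↦ k^{-α}`: the sets `a` of positive
integers with `Σ_{k ∈ a} k^{-α} < ∞`. -/
def sumIdeal (α : ℝ) : Set (Set ℕ) :=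
  {a | a ⊆ {k | 0 < k} ∧ Summable fun k : a => ((k : ℕ) : ℝ) ^ (-α)}

open ENNReal in
/-- Bridge: membership in `sumIdeal α` in terms of an `ℝ≥0∞`-valued `tsum`. -/
lemma mem_sumIdeal_iff (α : ℝ) (a : Set ℕ) :
    a ∈ sumIdeal α ↔ a ⊆ {k | 0 < k} ∧
      ∑' k : a, ENNReal.ofReal (((k : ℕ) : ℝ) ^ (-α)) ≠ ⊤ := by
  constructor
  · rintro ⟨h1, h2⟩
    refine ⟨h1, ?_⟩
    rw [← ENNReal.ofReal_tsum_of_nonneg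
      (fun k => Real.rpow_nonneg (Nat.cast_nonneg _) _) h2]
    exact ENNReal.ofReal_ne_top
  · rintro ⟨h1, h2⟩
    refine ⟨h1, ?_⟩
    exact (ENNReal.summable_toReal h2).congr
      (fun k => ENNReal.toReal_ofReal (Real.rpow_nonneg (Nat.cast_nonneg _) _))

/-- Monotonicity of `k ↦ ofReal (k ^ (-α))` in `α`, for `1 ≤ k`. -/
lemma ofReal_rpow_neg_mono {β γ : ℝ} (h : β ≤ γ) {k : ℕ} (hk : 1 ≤ k) :
    ENNReal.ofReal ((k : ℝ) ^ (-γ)) ≤ ENNReal.ofReal ((k : ℝ) ^ (-β)) :=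
  ENNReal.ofReal_le_ofReal
    (Real.rpow_le_rpow_of_exponent_le (by exact_mod_cast hk) (neg_le_neg h))

/-- A tail identity for `ℝ≥0∞`-valued sums. -/
lemma tsum_indicator_ge_eq (h : ℕ → ENNReal) (N : ℕ) :
    ∑' k, Set.indicator {k | N ≤ k} h k = ∑' i, h (i + N) := by
  rw [← Summable.sum_add_tsum_nat_add' (f := fun k => Set.indicator {k | N ≤ k} h k) (k := N)
    ENNReal.summable]
  have h0 : ∀ i ∈ Finset.range N, Set.indicator {k | N ≤ k} h i = 0 := by
    intro i hi
    exact Set.indicator_of_notMem (by simpa using Finset.mem_range.1 hi) h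
  rw [Finset.sum_congr rfl h0]
  simp only [Finset.sum_const_zero, zero_add]
  exact tsum_congr fun i => Set.indicator_of_mem (by simp) h

/-- Monotonicity of subtype `tsum` in the set, over `ℝ≥0∞`. -/
lemma tsum_subtype_mono (f : ℕ → ENNReal) {s t : Set ℕ} (hst : s ⊆ t) :
    ∑' k : s, f k ≤ ∑' k : t, f k := by
  rw [tsum_subtype, tsum_subtype]
  exact ENNReal.tsum_le_tsum
    (fun k => Set.indicator_le_indicator_of_subset hst (fun _ => zero_le) k)

lemma tsum_inv_two_pow_ne_top : ∑' i : ℕ, ((2 : ENNReal)⁻¹) ^ i ≠ ⊤ := by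
  rw [ENNReal.tsum_geometric, ENNReal.one_sub_inv_two]
  simp

/-- For a strictly decreasing sequence `⟨α_n⟩` of reals in `(0,1)`, the intersection
`J = ⋂_n sumIdeal α_n` is a tall P-ideal: (a) every infinite set of positive integers has
an infinite subset in `J`; (b) for every countable family `{a_m} ⊆ J` there is `b ∈ J`
with each `a_m \ b` finite. -/
theorem inter_sumIdeal_tall_Pideal
    (αs : ℕ → ℝ) (hanti : StrictAnti αs) (hmem : ∀ n, αs n ∈ Set.Ioo (0 : ℝ) 1) :
    (∀ a : Set ℕ, a ⊆ {k | 0 < k} → a.Infinite →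
      ∃ b ⊆ a, b.Infinite ∧ b ∈ ⋂ n, sumIdeal (αs n)) ∧
    (∀ a : ℕ → Set ℕ, (∀ m, a m ∈ ⋂ n, sumIdeal (αs n)) →
      ∃ b ∈ ⋂ n, sumIdeal (αs n), ∀ m, (a m \ b).Finite) := by
  set F : ℕ → ℕ → ENNReal := fun n k => ENNReal.ofReal ((k : ℝ) ^ (-αs n)) with hF
  -- the weight functions tend to 0 along ℕ
  have htend : ∀ j : ℕ, ∃ M : ℕ, ∀ k : ℕ, M ≤ k →
      F j k ≤ (2 : ENNReal)⁻¹ ^ j := by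
    intro j
    have h1 : Filter.Tendsto (fun k : ℕ => ((k : ℝ)) ^ (-αs j)) Filter.atTop (nhds 0) :=
      (tendsto_rpow_neg_atTop (hmem j).1).comp tendsto_natCast_atTop_atTop
    have h2 : ∀ᶠ k : ℕ in Filter.atTop, ((k : ℝ)) ^ (-αs j) < ((2 : ℝ)⁻¹) ^ j :=
      h1.eventually_lt_const (by positivity)
    obtain ⟨M, hM⟩ := Filter.eventually_atTop.1 h2
    refine ⟨M, fun k hk => ?_⟩
    calc F j k ≤ ENNReal.ofReal (((2 : ℝ)⁻¹) ^ j) :=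
          ENNReal.ofReal_le_ofReal (hM k hk).le
      _ = (2 : ENNReal)⁻¹ ^ j := by
          rw [ENNReal.ofReal_pow (by norm_num),
            ENNReal.ofReal_inv_of_pos (by norm_num)]
          norm_num
  constructor
  · -- tallness
    intro a ha hainf
    choose M hM using htend
    -- pick a strictly increasing sequence in `a` with `M j ≤ c j`
    have key : ∀ B : ℕ, ∃ x, x ∈ a ∧ B < x := by
      intro B
      obtain ⟨x, hx, hxB⟩ := hainf.exists_gt B
      exact ⟨x, hx, hxB⟩
    choose f hfa hfB using key
    set c : ℕ → ℕ := fun j => Nat.rec (f (M 0)) (fun j cj => f (max cj (M (j + 1)))) j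
      with hc
    have hc0 : c 0 = f (M 0) := rfl
    have hcs : ∀ j, c (j + 1) = f (max (c j) (M (j + 1))) := fun j => rfl
    have hca : ∀ j, c j ∈ a := by
      intro j; cases j with
      | zero => exact hfa _
      | succ j => rw [hcs]; exact hfa _
    have hcM : ∀ j, M j ≤ c j := by
      intro j; cases j with
      | zero => exact (hfB (M 0)).le
      | succ j => exact le_trans (le_max_right _ _) (hfB _).le
    have hmono : StrictMono c := by
      apply strictMono_nat_of_lt_succ
      intro j
      exact lt_of_le_of_lt (le_max_left _ _) (hfB (max (c j) (M (j + 1))))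
    have hcpos : ∀ j, 1 ≤ c j := fun j => ha (hca j)
    refine ⟨Set.range c, ?_, Set.infinite_range_of_injective hmono.injective, ?_⟩
    · rintro x ⟨j, rfl⟩; exact hca j
    · rw [Set.mem_iInter]
      intro n
      rw [mem_sumIdeal_iff]
      refine ⟨by rintro x ⟨j, rfl⟩; exact ha (hca j), ?_⟩
      rw [tsum_range (fun k : ℕ => F n k) hmono.injective]
      rw [← Summable.sum_add_tsum_nat_add' (f := fun j => F n (c j)) (k := n) ENNReal.summable]
      have htail : ∑' i, F n (c (i + n)) ≤ ∑' i : ℕ, (2 : ENNReal)⁻¹ ^ i := by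
        refine ENNReal.tsum_le_tsum fun i => ?_
        calc F n (c (i + n)) ≤ F (i + n) (c (i + n)) :=
              ofReal_rpow_neg_mono (hanti.antitone (Nat.le_add_left n i))
                (hcpos (i + n))
          _ ≤ (2 : ENNReal)⁻¹ ^ (i + n) := hM (i + n) _ (hcM (i + n))
          _ = (2 : ENNReal)⁻¹ ^ i * (2 : ENNReal)⁻¹ ^ n := pow_add _ _ _
          _ ≤ (2 : ENNReal)⁻¹ ^ i * 1 := by
              gcongr
              exact pow_le_one' (by simp) n
          _ = (2 : ENNReal)⁻¹ ^ i := mul_one _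
      have hfin2 : (∑ i ∈ Finset.range n, F n (c i)) + ∑' i : ℕ, (2 : ENNReal)⁻¹ ^ i ≠ ⊤ := by
        refine (ENNReal.add_lt_top.2 ⟨?_, ?_⟩).ne
        · exact ENNReal.sum_lt_top.2 fun j _ => ENNReal.ofReal_lt_top
        · exact lt_top_iff_ne_top.2 tsum_inv_two_pow_ne_top
      exact ne_top_of_le_ne_top hfin2 (add_le_add_right htail _)
  · -- P-ideal
    intro a hamem
    have hmemn : ∀ m n, a m ∈ sumIdeal (αs n) := by
      intro m n
      exact Set.mem_iInter.1 (hamem m) n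
    have hsub : ∀ m, a m ⊆ {k | 0 < k} := fun m => (hmemn m 0).1
    have hne : ∀ m n, ∑' k : a m, F n k ≠ ⊤ := by
      intro m n
      exact ((mem_sumIdeal_iff (αs n) (a m)).1 (hmemn m n)).2
    -- choose cut points N m with small tails
    have hNm : ∀ m : ℕ, ∃ N : ℕ,
        ∑' i, Set.indicator (a m) (F m) (i + N) ≤ (2 : ENNReal)⁻¹ ^ m := by
      intro m
      have hfin : ∑' k, Set.indicator (a m) (F m) k ≠ ⊤ := by
        rw [← tsum_subtype]; exact hne m m
      have := ENNReal.tendsto_sum_nat_add (Set.indicator (a m) (F m)) hfin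
      have h2 := this.eventually_lt_const
        (show (0 : ENNReal) < (2 : ENNReal)⁻¹ ^ m by
          apply ENNReal.pow_pos; simp)
      obtain ⟨N, hN⟩ := Filter.eventually_atTop.1 h2
      exact ⟨N, (hN N le_rfl).le⟩
    choose N hN using hNm
    set b : Set ℕ := ⋃ m, (a m ∩ {k | N m ≤ k}) with hb
    have hbsub : b ⊆ {k | 0 < k} := by
      rintro x hx
      obtain ⟨m, hm, -⟩ := Set.mem_iUnion.1 hx
      exact hsub m hm
    have hTm : ∀ m, ∑' k : (a m ∩ {k | N m ≤ k} : Set ℕ), F m k ≤ (2 : ENNReal)⁻¹ ^ m := by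
      intro m
      rw [tsum_subtype]
      calc ∑' k, Set.indicator (a m ∩ {k | N m ≤ k}) (F m) k
          = ∑' k, Set.indicator {k | N m ≤ k} (Set.indicator (a m) (F m)) k := by
            rw [Set.indicator_indicator, Set.inter_comm]
        _ = ∑' i, Set.indicator (a m) (F m) (i + N m) := tsum_indicator_ge_eq _ _
        _ ≤ (2 : ENNReal)⁻¹ ^ m := hN m
    refine ⟨b, ?_, ?_⟩
    · rw [Set.mem_iInter]
      intro n
      rw [mem_sumIdeal_iff]
      refine ⟨hbsub, ?_⟩
      have h1 : ∑' k : b, F n k ≤ ∑' m, ∑' k : (a m ∩ {k | N m ≤ k} : Set ℕ), F n k :=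
        ENNReal.tsum_iUnion_le_tsum (F n) _
      refine ne_top_of_le_ne_top ?_ h1
      rw [← Summable.sum_add_tsum_nat_add'
        (f := fun m => ∑' k : (a m ∩ {k | N m ≤ k} : Set ℕ), F n k) (k := n) ENNReal.summable]
      have htail : ∑' i, ∑' k : (a (i + n) ∩ {k | N (i + n) ≤ k} : Set ℕ), F n k
          ≤ ∑' i : ℕ, (2 : ENNReal)⁻¹ ^ i := by
        refine ENNReal.tsum_le_tsum fun i => ?_
        calc ∑' k : (a (i + n) ∩ {k | N (i + n) ≤ k} : Set ℕ), F n k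
            ≤ ∑' k : (a (i + n) ∩ {k | N (i + n) ≤ k} : Set ℕ), F (i + n) k := by
              refine ENNReal.tsum_le_tsum fun k => ?_
              exact ofReal_rpow_neg_mono (hanti.antitone (Nat.le_add_left n i))
                (hsub (i + n) k.2.1)
          _ ≤ (2 : ENNReal)⁻¹ ^ (i + n) := hTm (i + n)
          _ = (2 : ENNReal)⁻¹ ^ i * (2 : ENNReal)⁻¹ ^ n := pow_add _ _ _
          _ ≤ (2 : ENNReal)⁻¹ ^ i * 1 := by
              gcongr
              exact pow_le_one' (by simp) n
          _ = (2 : ENNReal)⁻¹ ^ i := mul_one _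
      refine (ENNReal.add_lt_top.2 ⟨?_, ?_⟩).ne
      · refine ENNReal.sum_lt_top.2 fun m _ => ?_
        exact lt_of_le_of_lt
          (tsum_subtype_mono (F n) (Set.inter_subset_left))
          (lt_top_iff_ne_top.2 (hne m n))
      · exact lt_of_le_of_lt htail (lt_top_iff_ne_top.2 tsum_inv_two_pow_ne_top)
    · intro m
      refine Set.Finite.subset (Set.finite_Iio (N m)) ?_
      rintro x ⟨hxa, hxb⟩
      by_contra h
      exact hxb (Set.mem_iUnion.2 ⟨m, hxa, show N m ≤ x from not_lt.1 (fun hlt => h hlt)⟩)
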